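/- arXiv:2410.18602 — 3 statements merged into one kernel-verified Lean document; each statement's English description precedes it below -/
import Mathlib

section
/- CPDA is individually rational: in the combinatorial diffusion auction setting, for every buyer i with true type θ_i, every report profile θ'_{-i} of the others, and every order o ∈ O(V), if i reports truthfully then her utility under order o satisfies u_i^o = SW*(θ', o_{≼i}, π^{o≺i}) − SW*(θ', o_{≺i}, π^{o≺i}) ≥ 0. -/
namespace DA

open scoped Classical

/-- A report profile for selling `k` homogeneous items: each agent reports a
valuation over quantities `0, …, k` and a set of neighbors. -/
structure Profile (V : Type*) (k : ℕ) where
  val : V → ℕ → ℝ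
  nbr : V → Set V

/-- A valuation is valid if it is normalized (`v 0 = 0`) and has
non-increasing marginals on `{0, …, k}`. -/
def ValidVal (k : ℕ) (v : ℕ → ℝ) : Prop :=
  v 0 = 0 ∧ ∀ q : ℕ, q + 2 ≤ k → v (q + 2) - v (q + 1) ≤ v (q + 1) - v q

variable {V : Type*}

/-- A profile is valid (w.r.t. seller `s`) if every buyer's valuation is valid. -/
def Profile.Valid {k : ℕ} (θ : Profile V k) (s : V) : Prop :=
  ∀ i : V, i ≠ s → ValidVal k (θ.val i)

/-- The reported (undirected) adjacency: `{i, j}` is an edge whenever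
`j ∈ r'_i` (or symmetrically `i ∈ r'_j`). -/
def Profile.adj {k : ℕ} (θ : Profile V k) (i j : V) : Prop :=
  j ∈ θ.nbr i ∨ i ∈ θ.nbr j

/-- The feasible set `F(θ', B)` of a coalition `B`: the buyers in `B` that are
connected to the seller `s` by a path of reported edges lying inside `B`
(empty if `s ∉ B`). -/
def Profile.feasible {k : ℕ} (θ : Profile V k) (s : V) (B : Set V) : Set V :=
  {i | i ≠ s ∧ i ∈ B ∧ s ∈ B ∧
    Relation.ReflTransGen (fun a b => θ.adj a b ∧ a ∈ B ∧ b ∈ B) s i}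

/-- Updating agent `i`'s report in a profile. -/
def updateAgent [DecidableEq V] {k : ℕ} (θ : Profile V k) (i : V)
    (v : ℕ → ℝ) (r : Set V) : Profile V k :=
  ⟨Function.update θ.val i v, Function.update θ.nbr i r⟩

/-- The profile `θ'_B` obtained by removing (setting to nil) the reports of
all agents outside the coalition `B`. -/
noncomputable def Profile.restrict {k : ℕ} (θ : Profile V k) (B : Set V) : Profile V k :=
  ⟨fun i q => if i ∈ B then θ.val i q else 0,
   fun i => if i ∈ B then θ.nbr i ∩ B else ∅⟩

section Homogeneous

variable [Fintype V] [DecidableEq V]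

/-- Social welfare of an allocation `π` under reports `θ`. -/
def SW {k : ℕ} (θ : Profile V k) (s : V) (π : V → ℕ) : ℝ :=
  ∑ i ∈ Finset.univ.erase s, θ.val i (π i)

/-- The allocations admissible for a coalition `B` with irrevocable prior
allocation `πhat`: at most `k` items in total are allocated (none to the
seller), only buyers in `F(θ, B)` receive items, and nobody receives fewer
items than in `πhat`. -/
def feasAllocs {k : ℕ} (θ : Profile V k) (s : V) (B : Set V) (πhat : V → ℕ) :
    Set (V → ℕ) :=
  {π | π s = 0 ∧ (∑ i ∈ Finset.univ.erase s, π i) ≤ k ∧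
    (∀ i, i ∉ θ.feasible s B → π i = 0) ∧ ∀ j, j ≠ s → πhat j ≤ π j}

/-- `SW*(θ, B, πhat)`: the maximum social welfare over the admissible
allocations for coalition `B` with prior allocation `πhat`. -/
noncomputable def SWstar {k : ℕ} (θ : Profile V k) (s : V) (B : Set V)
    (πhat : V → ℕ) : ℝ :=
  sSup (SW θ s '' feasAllocs θ s B πhat)

/-- A chosen allocation attaining `SW*(θ, B, πhat)`. -/
noncomputable def bestAlloc {k : ℕ} (θ : Profile V k) (s : V) (B : Set V)
    (πhat : V → ℕ) : V → ℕ :=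
  Classical.epsilon fun π =>
    π ∈ feasAllocs θ s B πhat ∧ SW θ s π = SWstar θ s B πhat

/-- `o_{≺i}`: the set of agents strictly preceding `i` in the order `o`. -/
def pred (o : V ≃ Fin (Fintype.card V)) (i : V) : Set V := {j | o j < o i}

/-- `o_{≼i} = o_{≺i} ∪ {i}`. -/
def predeq (o : V ≃ Fin (Fintype.card V)) (i : V) : Set V := {j | o j ≤ o i}

/-- The partial allocation produced by PDA after the first `t` agents of the
order `o` have been traversed: the seller is skipped, and each traversed buyer
`i` receives her share in a chosen allocation attaining
`SW*(θ, o_{≼i}, π^{o≺i})`, earlier allocations being irrevocable. -/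
noncomputable def pdaStep {k : ℕ} (θ : Profile V k) (s : V)
    (o : V ≃ Fin (Fintype.card V)) : ℕ → V → ℕ
  | 0 => fun _ => 0
  | t + 1 =>
    if h : t < Fintype.card V then
      let i := o.symm ⟨t, h⟩
      if i = s then pdaStep θ s o t
      else Function.update (pdaStep θ s o t) i
        (bestAlloc θ s (predeq o i) (pdaStep θ s o t) i)
    else pdaStep θ s o t

/-- `π^{o≺i}`: the allocation fixed by PDA right before agent `i` is traversed. -/
noncomputable def pdaPrior {k : ℕ} (θ : Profile V k) (s : V)
    (o : V ≃ Fin (Fintype.card V)) (i : V) : V → ℕ :=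
  pdaStep θ s o (o i : ℕ)

/-- The final allocation `π^o` produced by PDA under the order `o`. -/
noncomputable def pdaAlloc {k : ℕ} (θ : Profile V k) (s : V)
    (o : V ≃ Fin (Fintype.card V)) : V → ℕ :=
  pdaStep θ s o (Fintype.card V)

/-- The payment charged by PDA to agent `i` under the order `o`:
`p_i = SW*(θ, o_{≺i}, π^{o≺i}) − SW*(θ, o_{≼i}, π^{o≺i}) + v'_i(π_i)`, except
that agents traversed after all `k` items have been allocated pay `0`
(and the seller pays nothing). -/
noncomputable def pdaPay {k : ℕ} (θ : Profile V k) (s : V)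
    (o : V ≃ Fin (Fintype.card V)) (i : V) : ℝ :=
  if i = s then 0
  else if (∑ j ∈ Finset.univ.erase s, pdaPrior θ s o i j) = k then 0
  else SWstar θ s (pred o i) (pdaPrior θ s o i)
    - SWstar θ s (predeq o i) (pdaPrior θ s o i)
    + θ.val i (pdaAlloc θ s o i)

/-- `u_i^o`: the utility of buyer `i` with true valuation `v` under order `o`. -/
noncomputable def pdaUtil {k : ℕ} (v : ℕ → ℝ) (θ : Profile V k) (s : V)
    (o : V ≃ Fin (Fintype.card V)) (i : V) : ℝ :=
  v (pdaAlloc θ s o i) - pdaPay θ s o i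

/-- `E_PDA(u_i)`: buyer `i`'s expected utility over the uniformly random order. -/
noncomputable def pdaExpUtil {k : ℕ} (v : ℕ → ℝ) (θ : Profile V k) (s : V)
    (i : V) : ℝ :=
  (∑ o : V ≃ Fin (Fintype.card V), pdaUtil v θ s o i) /
    ((Fintype.card V).factorial : ℝ)

/-- `μ(θ)`: the fraction of orders for which PDA terminates with no item sold. -/
noncomputable def mu {k : ℕ} (θ : Profile V k) (s : V) : ℝ :=
  (Nat.card {o : V ≃ Fin (Fintype.card V) // ∀ j, pdaAlloc θ s o j = 0} : ℝ) /
    ((Fintype.card V).factorial : ℝ)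

/-- The Shapley contribution `φ_i(θ)` of agent `i`. -/
noncomputable def shapley {k : ℕ} (θ : Profile V k) (s : V) (i : V) : ℝ :=
  ∑ B ∈ (Finset.univ.erase i).powerset,
    ((B.card.factorial * (Fintype.card V - B.card - 1).factorial : ℝ) /
      ((Fintype.card V).factorial : ℝ)) *
    (SWstar θ s (↑(insert i B)) 0 - SWstar θ s (↑B) 0)

end Homogeneous

end DA

namespace DA

open scoped Classical

/-- A report profile for the combinatorial setting with item set
`K = {1, …, k}`: each agent reports a valuation over bundles (subsets of the
items) and a set of neighbors. -/
structure CProfile (V : Type*) (k : ℕ) where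
  val : V → Finset (Fin k) → ℝ
  nbr : V → Set V

/-- A combinatorial valuation is valid if it is normalized: `v ∅ = 0`. -/
def CValidVal (k : ℕ) (v : Finset (Fin k) → ℝ) : Prop := v ∅ = 0

variable {V : Type*}

/-- A combinatorial profile is valid if every buyer's valuation is valid. -/
def CProfile.Valid {k : ℕ} (θ : CProfile V k) (s : V) : Prop :=
  ∀ i : V, i ≠ s → CValidVal k (θ.val i)

/-- The reported (undirected) adjacency. -/
def CProfile.adj {k : ℕ} (θ : CProfile V k) (i j : V) : Prop :=
  j ∈ θ.nbr i ∨ i ∈ θ.nbr j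

/-- The feasible set `F(θ', B)` of a coalition `B`. -/
def CProfile.feasible {k : ℕ} (θ : CProfile V k) (s : V) (B : Set V) : Set V :=
  {i | i ≠ s ∧ i ∈ B ∧ s ∈ B ∧
    Relation.ReflTransGen (fun a b => θ.adj a b ∧ a ∈ B ∧ b ∈ B) s i}

/-- Updating agent `i`'s report in a combinatorial profile. -/
def CupdateAgent [DecidableEq V] {k : ℕ} (θ : CProfile V k) (i : V)
    (v : Finset (Fin k) → ℝ) (r : Set V) : CProfile V k :=
  ⟨Function.update θ.val i v, Function.update θ.nbr i r⟩

/-- The combinatorial profile `θ'_B` obtained by removing the reports of all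
agents outside the coalition `B`. -/
noncomputable def CProfile.restrict {k : ℕ} (θ : CProfile V k) (B : Set V) :
    CProfile V k :=
  ⟨fun i q => if i ∈ B then θ.val i q else 0,
   fun i => if i ∈ B then θ.nbr i ∩ B else ∅⟩

section Combinatorial

variable [Fintype V] [DecidableEq V]

/-- Social welfare of a combinatorial allocation `π`. -/
def CSW {k : ℕ} (θ : CProfile V k) (s : V) (π : V → Finset (Fin k)) : ℝ :=
  ∑ i ∈ Finset.univ.erase s, θ.val i (π i)

/-- The combinatorial allocations admissible for a coalition `B` with
irrevocable prior allocation `πhat`: each item goes to at most one buyer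
(none to the seller), only buyers in `F(θ, B)` receive items, and every
buyer keeps at least the bundle given in `πhat`. -/
def CfeasAllocs {k : ℕ} (θ : CProfile V k) (s : V) (B : Set V)
    (πhat : V → Finset (Fin k)) : Set (V → Finset (Fin k)) :=
  {π | π s = ∅ ∧ (∀ i j, i ≠ j → Disjoint (π i) (π j)) ∧
    (∀ i, i ∉ θ.feasible s B → π i = ∅) ∧ ∀ j, j ≠ s → πhat j ⊆ π j}

/-- `SW*(θ, B, πhat)` in the combinatorial setting. -/
noncomputable def CSWstar {k : ℕ} (θ : CProfile V k) (s : V) (B : Set V)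
    (πhat : V → Finset (Fin k)) : ℝ :=
  sSup (CSW θ s '' CfeasAllocs θ s B πhat)

/-- A chosen combinatorial allocation attaining `SW*(θ, B, πhat)`. -/
noncomputable def CbestAlloc {k : ℕ} (θ : CProfile V k) (s : V) (B : Set V)
    (πhat : V → Finset (Fin k)) : V → Finset (Fin k) :=
  Classical.epsilon fun π =>
    π ∈ CfeasAllocs θ s B πhat ∧ CSW θ s π = CSWstar θ s B πhat

/-- The partial allocation produced by CPDA after the first `t` agents of the
order `o` have been traversed. -/
noncomputable def cpdaStep {k : ℕ} (θ : CProfile V k) (s : V)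
    (o : V ≃ Fin (Fintype.card V)) : ℕ → V → Finset (Fin k)
  | 0 => fun _ => ∅
  | t + 1 =>
    if h : t < Fintype.card V then
      let i := o.symm ⟨t, h⟩
      if i = s then cpdaStep θ s o t
      else Function.update (cpdaStep θ s o t) i
        (CbestAlloc θ s (predeq o i) (cpdaStep θ s o t) i)
    else cpdaStep θ s o t

/-- `π^{o≺i}` in CPDA. -/
noncomputable def cpdaPrior {k : ℕ} (θ : CProfile V k) (s : V)
    (o : V ≃ Fin (Fintype.card V)) (i : V) : V → Finset (Fin k) :=
  cpdaStep θ s o (o i : ℕ)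

/-- The final allocation produced by CPDA under the order `o`. -/
noncomputable def cpdaAlloc {k : ℕ} (θ : CProfile V k) (s : V)
    (o : V ≃ Fin (Fintype.card V)) : V → Finset (Fin k) :=
  cpdaStep θ s o (Fintype.card V)

/-- The payment charged by CPDA to agent `i` under the order `o`; agents
traversed after all items have been allocated pay `0`. -/
noncomputable def cpdaPay {k : ℕ} (θ : CProfile V k) (s : V)
    (o : V ≃ Fin (Fintype.card V)) (i : V) : ℝ :=
  if i = s then 0
  else if Finset.univ.biUnion (cpdaPrior θ s o i) = (Finset.univ : Finset (Fin k)) then 0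
  else CSWstar θ s (pred o i) (cpdaPrior θ s o i)
    - CSWstar θ s (predeq o i) (cpdaPrior θ s o i)
    + θ.val i (cpdaAlloc θ s o i)

/-- `u_i^o` in CPDA, with true valuation `v`. -/
noncomputable def cpdaUtil {k : ℕ} (v : Finset (Fin k) → ℝ) (θ : CProfile V k)
    (s : V) (o : V ≃ Fin (Fintype.card V)) (i : V) : ℝ :=
  v (cpdaAlloc θ s o i) - cpdaPay θ s o i

/-- `E_CPDA(u_i)`: expected utility over the uniformly random order. -/
noncomputable def cpdaExpUtil {k : ℕ} (v : Finset (Fin k) → ℝ)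
    (θ : CProfile V k) (s : V) (i : V) : ℝ :=
  (∑ o : V ≃ Fin (Fintype.card V), cpdaUtil v θ s o i) /
    ((Fintype.card V).factorial : ℝ)

/-- `μ(θ)` for CPDA: the fraction of orders for which no item is sold. -/
noncomputable def cmu {k : ℕ} (θ : CProfile V k) (s : V) : ℝ :=
  (Nat.card {o : V ≃ Fin (Fintype.card V) // ∀ j, cpdaAlloc θ s o j = ∅} : ℝ) /
    ((Fintype.card V).factorial : ℝ)

/-- The Shapley contribution `φ_i(θ)` of agent `i` in the combinatorial setting. -/
noncomputable def cshapley {k : ℕ} (θ : CProfile V k) (s : V) (i : V) : ℝ :=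
  ∑ B ∈ (Finset.univ.erase i).powerset,
    ((B.card.factorial * (Fintype.card V - B.card - 1).factorial : ℝ) /
      ((Fintype.card V).factorial : ℝ)) *
    (CSWstar θ s (↑(insert i B)) (fun _ => ∅) - CSWstar θ s (↑B) (fun _ => ∅))

end Combinatorial

section IRproof

variable [Fintype V] [DecidableEq V] {k : ℕ}

lemma cfeasible_mono (θ : CProfile V k) (s : V) {B B' : Set V} (h : B ⊆ B') :
    θ.feasible s B ⊆ θ.feasible s B' := by
  rintro x ⟨h1, h2, h3, h4⟩
  exact ⟨h1, h h2, h h3, Relation.ReflTransGen.mono (fun a b hab => ⟨hab.1, h hab.2.1, h hab.2.2⟩) _ _ h4⟩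

lemma cfeasAllocs_mono (θ : CProfile V k) (s : V) {B B' : Set V} (h : B ⊆ B')
    (πhat : V → Finset (Fin k)) :
    CfeasAllocs θ s B πhat ⊆ CfeasAllocs θ s B' πhat := by
  rintro π ⟨h1, h2, h3, h4⟩
  exact ⟨h1, h2, fun i hi => h3 i fun hmem => hi (cfeasible_mono θ s h hmem), h4⟩

lemma cbestAlloc_spec (θ : CProfile V k) (s : V) (B : Set V)
    (πhat : V → Finset (Fin k)) (hne : (CfeasAllocs θ s B πhat).Nonempty) :
    CbestAlloc θ s B πhat ∈ CfeasAllocs θ s B πhat ∧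
      CSW θ s (CbestAlloc θ s B πhat) = CSWstar θ s B πhat := by
  have hfin : (CSW θ s '' CfeasAllocs θ s B πhat).Finite :=
    (Set.toFinite _).image _
  have hne' : (CSW θ s '' CfeasAllocs θ s B πhat).Nonempty := hne.image _
  obtain ⟨π, hπ, hπ2⟩ := hne'.csSup_mem hfin
  exact Classical.epsilon_spec (p := fun π => π ∈ CfeasAllocs θ s B πhat ∧
    CSW θ s π = CSWstar θ s B πhat) ⟨π, hπ, hπ2⟩

lemma cpdaStep_inv (θ : CProfile V k) (s : V) (o : V ≃ Fin (Fintype.card V)) :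
    ∀ t, cpdaStep θ s o t s = ∅ ∧
      (∀ a b, a ≠ b → Disjoint (cpdaStep θ s o t a) (cpdaStep θ s o t b)) ∧
      (∀ j, j ∉ θ.feasible s {x | (o x : ℕ) < t} → cpdaStep θ s o t j = ∅) := by
  intro t
  induction t with
  | zero => exact ⟨rfl, fun a b _ => by simp [cpdaStep], fun j _ => rfl⟩
  | succ t ih =>
    obtain ⟨ihs, ihd, ihf⟩ := ih
    have hsub : ({x | (o x : ℕ) < t} : Set V) ⊆ {x | (o x : ℕ) < t + 1} :=
      fun x hx => Nat.lt_succ_of_lt hx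
    by_cases h : t < Fintype.card V
    · set it := o.symm ⟨t, h⟩ with hit
      by_cases hits : it = s
      · have hstep : cpdaStep θ s o (t + 1) = cpdaStep θ s o t := by
          simp [cpdaStep, h, ← hit, hits]
        rw [hstep]
        exact ⟨ihs, ihd, fun j hj => ihf j fun hm =>
          hj (cfeasible_mono θ s hsub hm)⟩
      · have hpeq : predeq o it = {x | (o x : ℕ) < t + 1} := by
          ext x
          simp only [predeq, Set.mem_setOf_eq, Nat.lt_succ_iff, Fin.le_def, hit,
            Equiv.apply_symm_apply]
        have hstep : cpdaStep θ s o (t + 1) = Function.update (cpdaStep θ s o t) it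
            (CbestAlloc θ s (predeq o it) (cpdaStep θ s o t) it) := by
          simp [cpdaStep, h, ← hit, hits]
        have hmem : cpdaStep θ s o t ∈
            CfeasAllocs θ s (predeq o it) (cpdaStep θ s o t) := by
          refine ⟨ihs, ihd, fun j hj => ihf j fun hm => hj ?_, fun j _ => subset_rfl⟩
          rw [hpeq]; exact cfeasible_mono θ s hsub hm
        obtain ⟨hb, hbsw⟩ := cbestAlloc_spec θ s (predeq o it)
          (cpdaStep θ s o t) ⟨_, hmem⟩
        set π := CbestAlloc θ s (predeq o it) (cpdaStep θ s o t) with hπ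
        obtain ⟨hbs, hbd, hbf, hble⟩ := hb
        rw [hstep]
        refine ⟨?_, ?_, ?_⟩
        · rw [Function.update_of_ne (Ne.symm hits)]
          exact ihs
        · intro a b hab
          by_cases ha : a = it
          · have hb' : b ≠ it := fun hh => hab (ha.trans hh.symm)
            rw [ha, Function.update_self, Function.update_of_ne hb']
            rcases eq_or_ne b s with hbs2 | hbs2
            · rw [hbs2, ihs]; exact Finset.disjoint_empty_right _
            · exact (hbd it b fun hh => hb' hh.symm).mono_right (hble b hbs2)
          · rw [Function.update_of_ne ha]
            by_cases hb' : b = it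
            · rw [hb', Function.update_self]
              rcases eq_or_ne a s with has2 | has2
              · rw [has2, ihs]; exact Finset.disjoint_empty_left _
              · exact ((hbd it a fun hh => ha hh.symm).mono_right (hble a has2)).symm
            · rw [Function.update_of_ne hb']; exact ihd a b hab
        · intro j hj
          by_cases hj' : j = it
          · rw [hj', Function.update_self]
            exact hbf it (by rw [hpeq, ← hj']; exact hj)
          · rw [Function.update_of_ne hj']
            exact ihf j fun hm => hj (cfeasible_mono θ s hsub hm)
    · have hstep : cpdaStep θ s o (t + 1) = cpdaStep θ s o t := by
        simp [cpdaStep, h]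
      rw [hstep]
      exact ⟨ihs, ihd, fun j hj => ihf j fun hm =>
        hj (cfeasible_mono θ s hsub hm)⟩

lemma cpdaPrior_mem_pred (θ : CProfile V k) (s : V)
    (o : V ≃ Fin (Fintype.card V)) (i : V) :
    cpdaPrior θ s o i ∈ CfeasAllocs θ s (pred o i) (cpdaPrior θ s o i) := by
  obtain ⟨h1, h2, h3⟩ := cpdaStep_inv θ s o (o i : ℕ)
  have hpe : ({x | (o x : ℕ) < (o i : ℕ)} : Set V) = pred o i := by
    ext x; simp only [pred, Set.mem_setOf_eq, Fin.lt_def]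
  refine ⟨h1, h2, fun j hj => h3 j ?_, fun j _ => subset_rfl⟩
  rwa [hpe]

lemma cpdaPrior_mem_predeq (θ : CProfile V k) (s : V)
    (o : V ≃ Fin (Fintype.card V)) (i : V) :
    cpdaPrior θ s o i ∈ CfeasAllocs θ s (predeq o i) (cpdaPrior θ s o i) :=
  cfeasAllocs_mono θ s (show pred o i ⊆ predeq o i from fun x (hx : o x < o i) => (le_of_lt hx : o x ≤ o i)) _
    (cpdaPrior_mem_pred θ s o i)

lemma cpdaAlloc_eq (θ : CProfile V k) (s : V)
    (o : V ≃ Fin (Fintype.card V)) (i : V) (hi : i ≠ s) :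
    cpdaAlloc θ s o i = CbestAlloc θ s (predeq o i) (cpdaPrior θ s o i) i := by
  have key : ∀ t, (o i : ℕ) < t → t ≤ Fintype.card V →
      cpdaStep θ s o t i = CbestAlloc θ s (predeq o i) (cpdaPrior θ s o i) i := by
    intro t
    induction t with
    | zero => omega
    | succ t ih =>
      intro hlt hle
      have ht : t < Fintype.card V := by omega
      rcases Nat.lt_succ_iff_lt_or_eq.mp hlt with hlt' | heq
      · have hne : o.symm ⟨t, ht⟩ ≠ i := by
          intro hh
          have : (o i : ℕ) = t := by rw [← hh, Equiv.apply_symm_apply]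
          omega
        have : cpdaStep θ s o (t + 1) i = cpdaStep θ s o t i := by
          by_cases hs' : o.symm ⟨t, ht⟩ = s
          · simp [cpdaStep, ht, hs']
          · simp [cpdaStep, ht, hs', Function.update_of_ne (Ne.symm hne)]
        rw [this]
        exact ih hlt' (le_of_lt (Nat.lt_of_lt_of_le (Nat.lt_succ_self t) hle))
      · have hsymm : o.symm ⟨t, ht⟩ = i := by
          rw [show (⟨t, ht⟩ : Fin (Fintype.card V)) = o i from Fin.ext heq.symm,
            Equiv.symm_apply_apply]
        have : cpdaStep θ s o (t + 1) i = Function.update (cpdaStep θ s o t) i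
            (CbestAlloc θ s (predeq o i) (cpdaStep θ s o t) i) i := by
          simp [cpdaStep, ht, hsymm, hi]
        rw [this, Function.update_self, show t = (o i : ℕ) from heq.symm]
        rfl
  exact key (Fintype.card V) (o i).isLt le_rfl

lemma cSWstar_full (θ : CProfile V k) (s : V) (B : Set V)
    (πhat : V → Finset (Fin k))
    (hmem : πhat ∈ CfeasAllocs θ s B πhat)
    (hfull : Finset.univ.biUnion πhat = (Finset.univ : Finset (Fin k))) :
    CfeasAllocs θ s B πhat = {πhat} := by
  ext π
  simp only [Set.mem_singleton_iff]
  constructor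
  · rintro ⟨h1, h2, h3, h4⟩
    funext j'
    apply subset_antisymm
    · intro l hl
      have : l ∈ Finset.univ.biUnion πhat := by rw [hfull]; exact Finset.mem_univ l
      obtain ⟨j, _, hlj⟩ := Finset.mem_biUnion.mp this
      have hjs : j ≠ s := by
        intro hh; rw [hh, hmem.1] at hlj; exact absurd hlj (Finset.notMem_empty l)
      have hlπj : l ∈ π j := h4 j hjs hlj
      have : j' = j := by
        by_contra hne
        exact Finset.disjoint_left.mp (h2 j' j hne) hl hlπj
      rwa [this]
    · rcases eq_or_ne j' s with rfl | hne
      · rw [hmem.1, h1]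
      · exact h4 j' hne
  · rintro rfl; exact hmem

lemma cSWstar_eq_of_singleton (θ : CProfile V k) (s : V) (B : Set V)
    (πhat : V → Finset (Fin k))
    (h : CfeasAllocs θ s B πhat = {πhat}) :
    CSWstar θ s B πhat = CSW θ s πhat := by
  rw [CSWstar, h, Set.image_singleton, csSup_singleton]

end IRproof

end DA


/-- CPDA is individually rational: in the combinatorial setting,
for every buyer i reporting truthfully, every report profile of the others, and
every order o, her utility under order o satisfies
u_i^o = SW*(θ', o_{≼i}, π^{o≺i}) − SW*(θ', o_{≺i}, π^{o≺i}) ≥ 0. -/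
theorem cpda_IR {V : Type*} [Fintype V] [DecidableEq V]
    {k : ℕ} (hk : 1 ≤ k) (θ : DA.CProfile V k) (s : V) (hθ : θ.Valid s)
    (i : V) (hi : i ≠ s) (o : V ≃ Fin (Fintype.card V)) :
    DA.cpdaUtil (θ.val i) θ s o i
      = DA.CSWstar θ s (DA.predeq o i) (DA.cpdaPrior θ s o i)
        - DA.CSWstar θ s (DA.pred o i) (DA.cpdaPrior θ s o i)
    ∧ 0 ≤ DA.cpdaUtil (θ.val i) θ s o i := by
  classical
  set πh := DA.cpdaPrior θ s o i with hπh
  have hpredmem := DA.cpdaPrior_mem_pred θ s o i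
  have hpredeqmem := DA.cpdaPrior_mem_predeq θ s o i
  have hle : DA.CSWstar θ s (DA.pred o i) πh ≤ DA.CSWstar θ s (DA.predeq o i) πh := by
    apply csSup_le_csSup
    · exact ((Set.toFinite _).image _).bddAbove
    · exact ⟨_, Set.mem_image_of_mem _ hpredmem⟩
    · exact Set.image_mono (DA.cfeasAllocs_mono θ s
        (show DA.pred o i ⊆ DA.predeq o i from fun x (hx : o x < o i) => (le_of_lt hx : o x ≤ o i)) _)
  rw [DA.cpdaUtil, DA.cpdaPay, if_neg hi]
  by_cases hfull : Finset.univ.biUnion (DA.cpdaPrior θ s o i) = (Finset.univ : Finset (Fin k))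
  · rw [if_pos hfull]
    have hsing := DA.cSWstar_full θ s (DA.predeq o i) πh hpredeqmem hfull
    have hsing' := DA.cSWstar_full θ s (DA.pred o i) πh hpredmem hfull
    have heq1 := DA.cSWstar_eq_of_singleton θ s (DA.predeq o i) πh hsing
    have heq2 := DA.cSWstar_eq_of_singleton θ s (DA.pred o i) πh hsing'
    have halloc : DA.cpdaAlloc θ s o i = ∅ := by
      rw [DA.cpdaAlloc_eq θ s o i hi]
      have hb := (DA.cbestAlloc_spec θ s (DA.predeq o i) πh ⟨_, hpredeqmem⟩).1
      rw [hsing] at hb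
      rw [Set.mem_singleton_iff.mp hb]
      exact hpredmem.2.2.1 i (by simp [DA.CProfile.feasible, DA.pred])
    rw [halloc, (hθ i hi : θ.val i ∅ = 0), heq1, heq2]
    norm_num
  · rw [if_neg hfull]
    constructor
    · ring
    · linarith
end

section
/- For any report profile θ' and any order o ∈ O(V), the seller's revenue in PDA under order o, Rev^o(θ') = Σ_{i∈N} p_i^o(θ'), satisfies Rev^o(θ') = (SW(θ', π^o) − SW*(θ', V, π^o)) + SW*(θ', o_{≼s}), where π^o is the final allocation produced by PDA under order o. -/
namespace DA

open scoped Classical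

section Aux

variable {V : Type*} [Fintype V] [DecidableEq V] {k : ℕ}

lemma feasAllocs_finite (θ : Profile V k) (s : V) (B : Set V) (phat : V → ℕ) :
    (feasAllocs θ s B phat).Finite := by
  apply Set.Finite.subset (Set.Finite.pi (fun _ : V => Set.finite_Iic k))
  intro π hπ
  rw [Set.mem_pi]
  intro i _
  rcases eq_or_ne i s with rfl | hi
  · rw [Set.mem_Iic, hπ.1]; exact Nat.zero_le k
  · exact le_trans (Finset.single_le_sum (f := π) (fun j _ => Nat.zero_le _)
      (Finset.mem_erase.mpr ⟨hi, Finset.mem_univ i⟩)) hπ.2.1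

lemma bestAlloc_spec (θ : Profile V k) (s : V) (B : Set V) (phat : V → ℕ)
    (h : (feasAllocs θ s B phat).Nonempty) :
    bestAlloc θ s B phat ∈ feasAllocs θ s B phat ∧
      SW θ s (bestAlloc θ s B phat) = SWstar θ s B phat := by
  have himg : (SW θ s '' feasAllocs θ s B phat).Nonempty := h.image _
  have hfin := (feasAllocs_finite θ s B phat).image (SW θ s)
  have hmem := himg.csSup_mem hfin
  rw [Set.mem_image] at hmem
  obtain ⟨π, hπ, hsw⟩ := hmem
  exact Classical.epsilon_spec (p := fun π =>
    π ∈ feasAllocs θ s B phat ∧ SW θ s π = SWstar θ s B phat) ⟨π, hπ, hsw⟩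

lemma le_SWstar {θ : Profile V k} {s : V} {B : Set V} {phat π : V → ℕ}
    (h : π ∈ feasAllocs θ s B phat) : SW θ s π ≤ SWstar θ s B phat :=
  le_csSup ((feasAllocs_finite θ s B phat).image _).bddAbove ⟨π, h, rfl⟩

lemma feasible_mono (θ : Profile V k) (s : V) {B B' : Set V} (h : B ⊆ B') :
    θ.feasible s B ⊆ θ.feasible s B' := by
  intro i hi
  exact ⟨hi.1, h hi.2.1, h hi.2.2.1,
    Relation.ReflTransGen.mono (p := fun a b => θ.adj a b ∧ a ∈ B' ∧ b ∈ B')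
      (fun a b hab => ⟨hab.1, h hab.2.1, h hab.2.2⟩) _ _ hi.2.2.2⟩

lemma feasAllocs_mono (θ : Profile V k) (s : V) {B B' : Set V} (h : B ⊆ B')
    {phat π : V → ℕ} (hπ : π ∈ feasAllocs θ s B phat) : π ∈ feasAllocs θ s B' phat :=
  ⟨hπ.1, hπ.2.1, fun i hi => hπ.2.2.1 i (fun hmem => hi (feasible_mono θ s h hmem)),
    hπ.2.2.2⟩

lemma SWstar_update (θ : Profile V k) (s : V) (B : Set V) {phat : V → ℕ} {j : V}
    (h : phat ∈ feasAllocs θ s B phat) (hjs : j ≠ s) :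
    SWstar θ s B (Function.update phat j (bestAlloc θ s B phat j)) = SWstar θ s B phat := by
  obtain ⟨ha, hsw⟩ := bestAlloc_spec θ s B phat ⟨phat, h⟩
  set a := bestAlloc θ s B phat with hadef
  have hle : ∀ l, l ≠ s → Function.update phat j (a j) l ≤ a l := by
    intro l hl
    rcases eq_or_ne l j with rfl | hlj
    · rw [Function.update_self]
    · rw [Function.update_of_ne hlj]; exact ha.2.2.2 l hl
  have hge : ∀ l, phat l ≤ Function.update phat j (a j) l := by
    intro l
    rcases eq_or_ne l j with rfl | hlj
    · rw [Function.update_self]; exact ha.2.2.2 l hjs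
    · rw [Function.update_of_ne hlj]
  have h2 : a ∈ feasAllocs θ s B (Function.update phat j (a j)) :=
    ⟨ha.1, ha.2.1, ha.2.2.1, fun l hl => hle l hl⟩
  have h1 : feasAllocs θ s B (Function.update phat j (a j)) ⊆ feasAllocs θ s B phat := by
    intro π hπ
    exact ⟨hπ.1, hπ.2.1, hπ.2.2.1, fun l hl => le_trans (hge l) (hπ.2.2.2 l hl)⟩
  refine le_antisymm ?_ ?_
  · exact csSup_le_csSup ((feasAllocs_finite θ s B phat).image _).bddAbove
      ⟨SW θ s a, a, h2, rfl⟩ (Set.image_mono h1)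
  · rw [← hsw]; exact le_SWstar h2

lemma feasAllocs_eq_singleton (θ : Profile V k) (s : V) (B : Set V) {phat : V → ℕ}
    (h : phat ∈ feasAllocs θ s B phat)
    (hsum : (∑ i ∈ Finset.univ.erase s, phat i) = k) :
    feasAllocs θ s B phat = {phat} := by
  apply Set.eq_singleton_iff_unique_mem.mpr
  refine ⟨h, fun π hπ => ?_⟩
  have hle : ∀ i ∈ Finset.univ.erase s, phat i ≤ π i := fun i hi =>
    hπ.2.2.2 i (Finset.mem_erase.mp hi).1
  have hseq : (∑ i ∈ Finset.univ.erase s, phat i) = ∑ i ∈ Finset.univ.erase s, π i :=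
    le_antisymm (Finset.sum_le_sum hle) (by rw [hsum]; exact hπ.2.1)
  have hpt := (Finset.sum_eq_sum_iff_of_le hle).mp hseq
  funext i
  rcases eq_or_ne i s with rfl | hi
  · rw [hπ.1, h.1]
  · exact (hpt i (Finset.mem_erase.mpr ⟨hi, Finset.mem_univ i⟩)).symm

lemma SWstar_of_sum_eq (θ : Profile V k) (s : V) (B : Set V) {phat : V → ℕ}
    (h : phat ∈ feasAllocs θ s B phat)
    (hsum : (∑ i ∈ Finset.univ.erase s, phat i) = k) :
    SWstar θ s B phat = SW θ s phat := by
  unfold SWstar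
  rw [feasAllocs_eq_singleton θ s B h hsum, Set.image_singleton, csSup_singleton]

lemma bestAlloc_of_sum_eq (θ : Profile V k) (s : V) (B : Set V) {phat : V → ℕ}
    (h : phat ∈ feasAllocs θ s B phat)
    (hsum : (∑ i ∈ Finset.univ.erase s, phat i) = k) :
    bestAlloc θ s B phat = phat := by
  have hmem := (bestAlloc_spec θ s B phat ⟨phat, h⟩).1
  rw [feasAllocs_eq_singleton θ s B h hsum] at hmem
  exact hmem

lemma zero_mem_feasAllocs (θ : Profile V k) (s : V) (B : Set V) :
    (0 : V → ℕ) ∈ feasAllocs θ s B 0 := by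
  refine ⟨rfl, ?_, fun i _ => rfl, fun j _ => le_refl 0⟩
  simp

lemma feasAllocs_no_seller (θ : Profile V k) (s : V) {B : Set V} (hs : s ∉ B) :
    feasAllocs θ s B 0 = {(0 : V → ℕ)} := by
  have hfe : θ.feasible s B = ∅ := by
    ext i
    simp only [Profile.feasible, Set.mem_setOf_eq, Set.mem_empty_iff_false, iff_false]
    rintro ⟨-, -, hsB, -⟩; exact hs hsB
  apply Set.eq_singleton_iff_unique_mem.mpr
  refine ⟨zero_mem_feasAllocs θ s B, fun π hπ => ?_⟩
  funext i
  exact hπ.2.2.1 i (by rw [hfe]; exact Set.notMem_empty i)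

lemma SW_zero (θ : Profile V k) (s : V) (hθ : θ.Valid s) : SW θ s 0 = 0 :=
  Finset.sum_eq_zero fun i hi => (hθ i (Finset.mem_erase.mp hi).1).1

lemma SWstar_no_seller (θ : Profile V k) (s : V) (hθ : θ.Valid s) {B : Set V}
    (hs : s ∉ B) : SWstar θ s B 0 = 0 := by
  unfold SWstar
  rw [feasAllocs_no_seller θ s hs, Set.image_singleton, csSup_singleton,
    SW_zero θ s hθ]

end Aux

section Steps

variable {V : Type*} [Fintype V] [DecidableEq V] {k : ℕ}
variable (θ : Profile V k) (s : V) (o : V ≃ Fin (Fintype.card V))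

lemma pdaStep_zero : pdaStep θ s o 0 = 0 := rfl

lemma pdaStep_succ_of_ge (t : ℕ) (ht : ¬ t < Fintype.card V) :
    pdaStep θ s o (t + 1) = pdaStep θ s o t := by
  rw [pdaStep, dif_neg ht]

lemma pdaStep_succ_seller (t : ℕ) (ht : t < Fintype.card V)
    (hs : o.symm ⟨t, ht⟩ = s) :
    pdaStep θ s o (t + 1) = pdaStep θ s o t := by
  rw [pdaStep, dif_pos ht]
  simp [hs]

lemma pdaStep_succ_buyer (t : ℕ) (ht : t < Fintype.card V)
    (hs : o.symm ⟨t, ht⟩ ≠ s) :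
    pdaStep θ s o (t + 1) = Function.update (pdaStep θ s o t) (o.symm ⟨t, ht⟩)
      (bestAlloc θ s (predeq o (o.symm ⟨t, ht⟩)) (pdaStep θ s o t)
        (o.symm ⟨t, ht⟩)) := by
  rw [pdaStep, dif_pos ht]
  simp [hs]

lemma predeq_eq (i : V) : predeq o i = {l | (o l : ℕ) < (o i : ℕ) + 1} := by
  ext l
  simp only [predeq, Set.mem_setOf_eq, Fin.le_def, Nat.lt_succ_iff]

lemma pred_eq (i : V) : pred o i = {l | (o l : ℕ) < (o i : ℕ)} := by
  ext l
  simp only [pred, Set.mem_setOf_eq, Fin.lt_def]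

lemma pdaStep_eq_zero_of_le : ∀ t (i : V), t ≤ (o i : ℕ) → pdaStep θ s o t i = 0 := by
  intro t
  induction t with
  | zero => intro i _; rfl
  | succ t ih =>
    intro i hti
    have ht : t < Fintype.card V := lt_of_lt_of_le (Nat.lt_of_succ_le hti) (o i).2.le
    set j := o.symm ⟨t, ht⟩ with hj
    have hji : j ≠ i := by
      intro hq
      have : (o i : ℕ) = t := by rw [← hq, Equiv.apply_symm_apply]
      omega
    rcases eq_or_ne j s with hjs | hjs
    · rw [pdaStep_succ_seller θ s o t ht hjs]
      exact ih i (le_trans (Nat.le_succ t) hti)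
    · rw [pdaStep_succ_buyer θ s o t ht hjs, Function.update_of_ne hji.symm]
      exact ih i (le_trans (Nat.le_succ t) hti)

lemma pdaStep_stable : ∀ t (i : V), (o i : ℕ) < t →
    pdaStep θ s o t i = pdaStep θ s o ((o i : ℕ) + 1) i := by
  intro t
  induction t with
  | zero => intro i h; omega
  | succ t ih =>
    intro i hti
    rcases eq_or_ne ((o i : ℕ) + 1) (t + 1) with he | hne
    · rw [he]
    · have hlt : (o i : ℕ) < t := by omega
      by_cases ht : t < Fintype.card V
      · set j := o.symm ⟨t, ht⟩ with hj
        have hji : j ≠ i := by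
          intro hq
          have : (o i : ℕ) = t := by rw [← hq, Equiv.apply_symm_apply]
          omega
        rcases eq_or_ne j s with hjs | hjs
        · rw [pdaStep_succ_seller θ s o t ht hjs]; exact ih i hlt
        · rw [pdaStep_succ_buyer θ s o t ht hjs, Function.update_of_ne hji.symm]
          exact ih i hlt
      · rw [pdaStep_succ_of_ge θ s o t ht]; exact ih i hlt

lemma pdaStep_eq_zero_before : ∀ t, t ≤ (o s : ℕ) + 1 → pdaStep θ s o t = 0 := by
  intro t
  induction t with
  | zero => intro _; rfl
  | succ t ih =>
    intro hts
    have hts' : t ≤ (o s : ℕ) := by omega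
    have hzero := ih (by omega)
    have ht : t < Fintype.card V := lt_of_le_of_lt hts' (o s).2
    set j := o.symm ⟨t, ht⟩ with hj
    rcases eq_or_ne j s with hjs | hjs
    · rw [pdaStep_succ_seller θ s o t ht hjs]; exact hzero
    · have hojt : (o j : ℕ) = t := by rw [hj, Equiv.apply_symm_apply]
      have hts'' : t < (o s : ℕ) := by
        rcases lt_or_eq_of_le hts' with h | h
        · exact h
        · exfalso; apply hjs
          have : o j = o s := Fin.ext (by rw [hojt, h])
          exact o.injective this
      have hsB : s ∉ predeq o j := by
        simp only [predeq, Set.mem_setOf_eq, Fin.le_def, hojt]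
        omega
      rw [pdaStep_succ_buyer θ s o t ht hjs, hzero]
      have hba : bestAlloc θ s (predeq o j) 0 = 0 := by
        have := (bestAlloc_spec θ s (predeq o j) 0
          ⟨0, zero_mem_feasAllocs θ s _⟩).1
        rw [feasAllocs_no_seller θ s hsB] at this
        exact this
      rw [hba]
      funext l
      rcases eq_or_ne l j with rfl | hlj
      · rw [Function.update_self]
      · rw [Function.update_of_ne hlj]

lemma pdaStep_mem : ∀ t,
    pdaStep θ s o t ∈ feasAllocs θ s {j | (o j : ℕ) < t} (pdaStep θ s o t) := by
  intro t
  induction t with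
  | zero =>
    exact ⟨rfl, le_of_eq_of_le (Finset.sum_eq_zero fun i _ => rfl) (Nat.zero_le k),
      fun i _ => rfl, fun j _ => le_refl _⟩
  | succ t ih =>
    have hBB : ({j | (o j : ℕ) < t} : Set V) ⊆ {j | (o j : ℕ) < t + 1} :=
      fun l hl => Nat.lt_succ_of_lt hl
    by_cases ht : t < Fintype.card V
    · set j := o.symm ⟨t, ht⟩ with hj
      rcases eq_or_ne j s with hjs | hjs
      · rw [pdaStep_succ_seller θ s o t ht hjs]
        exact feasAllocs_mono θ s hBB ih
      · have hojt : (o j : ℕ) = t := by rw [hj, Equiv.apply_symm_apply]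
        have hset : predeq o j = {l | (o l : ℕ) < t + 1} := by
          rw [predeq_eq, hojt]
        set old := pdaStep θ s o t with hold
        have hold1 : old ∈ feasAllocs θ s (predeq o j) old := by
          rw [hset]; exact feasAllocs_mono θ s hBB ih
        obtain ⟨ha, -⟩ := bestAlloc_spec θ s (predeq o j) old ⟨old, hold1⟩
        set a := bestAlloc θ s (predeq o j) old with hadef
        rw [pdaStep_succ_buyer θ s o t ht hjs, ← hadef, ← hold]
        have hle : ∀ l, l ≠ s → Function.update old j (a j) l ≤ a l := by
          intro l hl
          rcases eq_or_ne l j with rfl | hlj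
          · rw [Function.update_self]
          · rw [Function.update_of_ne hlj]; exact ha.2.2.2 l hl
        refine ⟨?_, ?_, ?_, fun l _ => le_refl _⟩
        · rw [Function.update_of_ne (Ne.symm hjs)]; exact ih.1
        · calc (∑ i ∈ Finset.univ.erase s, Function.update old j (a j) i)
              ≤ ∑ i ∈ Finset.univ.erase s, a i :=
                Finset.sum_le_sum fun i hi => hle i (Finset.mem_erase.mp hi).1
            _ ≤ k := ha.2.1
        · intro i hi
          rcases eq_or_ne i j with rfl | hij
          · rw [Function.update_self]
            apply ha.2.2.1
            rw [hset]; exact hi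
          · rw [Function.update_of_ne hij]
            apply ih.2.2.1
            intro hmem
            exact hi (feasible_mono θ s hBB hmem)
    · rw [pdaStep_succ_of_ge θ s o t ht]
      exact feasAllocs_mono θ s hBB ih

lemma pdaPay_eq_formula (hθ : θ.Valid s) (j : V) (hj : j ≠ s) :
    pdaPay θ s o j
      = (SWstar θ s {l | (o l : ℕ) < (o j : ℕ)} (pdaStep θ s o (o j : ℕ))
          - SWstar θ s {l | (o l : ℕ) < (o j : ℕ) + 1} (pdaStep θ s o ((o j : ℕ) + 1)))
        + θ.val j (pdaAlloc θ s o j) := by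
  have ht : (o j : ℕ) < Fintype.card V := (o j).2
  have hsymm : o.symm ⟨(o j : ℕ), ht⟩ = j := by
    have h0 : (⟨(o j : ℕ), ht⟩ : Fin (Fintype.card V)) = o j := Fin.ext rfl
    rw [h0, Equiv.symm_apply_apply]
  have hstep := pdaStep_succ_buyer θ s o (o j : ℕ) ht (by rw [hsymm]; exact hj)
  rw [hsymm] at hstep
  set old := pdaStep θ s o (o j : ℕ) with holddef
  have hold : old ∈ feasAllocs θ s {l | (o l : ℕ) < (o j : ℕ)} old :=
    pdaStep_mem θ s o (o j : ℕ)
  have hold1' : old ∈ feasAllocs θ s {l | (o l : ℕ) < (o j : ℕ) + 1} old :=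
    feasAllocs_mono θ s (fun l hl => Nat.lt_succ_of_lt hl) hold
  have hold1 : old ∈ feasAllocs θ s (predeq o j) old := by
    rw [predeq_eq]; exact hold1'
  have halloc : pdaAlloc θ s o j = bestAlloc θ s (predeq o j) old j := by
    unfold pdaAlloc
    rw [pdaStep_stable θ s o (Fintype.card V) j ht, hstep, Function.update_self]
  have hprior : pdaPrior θ s o j = old := rfl
  unfold pdaPay
  rw [if_neg hj, hprior]
  by_cases hg : (∑ l ∈ Finset.univ.erase s, old l) = k
  · rw [if_pos hg]
    have hba : bestAlloc θ s (predeq o j) old = old :=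
      bestAlloc_of_sum_eq θ s _ hold1 hg
    have hzero : old j = 0 := pdaStep_eq_zero_of_le θ s o (o j : ℕ) j le_rfl
    rw [hba] at hstep halloc
    rw [Function.update_eq_self] at hstep
    rw [SWstar_of_sum_eq θ s _ hold hg, hstep,
      SWstar_of_sum_eq θ s _ hold1' hg, halloc, hzero, (hθ j hj).1]
    ring
  · rw [if_neg hg, pred_eq, hstep, ← predeq_eq o j,
      SWstar_update θ s (predeq o j) hold1 hj]

end Steps

end DA

/-- For any report profile θ' and any order o, the seller's
revenue in PDA under order o satisfies
Rev^o(θ') = (SW(θ', π^o) − SW*(θ', V, π^o)) + SW*(θ', o_{≼s}), where π^o is the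
final allocation produced by PDA under order o. -/
theorem pda_revenue_formula {V : Type*} [Fintype V] [DecidableEq V]
    {k : ℕ} (hk : 1 ≤ k) (θ : DA.Profile V k) (s : V) (hθ : θ.Valid s)
    (o : V ≃ Fin (Fintype.card V)) :
    ∑ i ∈ Finset.univ.erase s, DA.pdaPay θ s o i
      = (DA.SW θ s (DA.pdaAlloc θ s o)
          - DA.SWstar θ s Set.univ (DA.pdaAlloc θ s o))
        + DA.SWstar θ s (DA.predeq o s) 0 := by
  classical
  set F : ℕ → ℝ := fun t =>
    DA.SWstar θ s {l | (o l : ℕ) < t} (DA.pdaStep θ s o t) with hF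
  have hpay : ∀ j ∈ Finset.univ.erase s, DA.pdaPay θ s o j
      = (F (o j : ℕ) - F ((o j : ℕ) + 1)) + θ.val j (DA.pdaAlloc θ s o j) :=
    fun j hj => DA.pdaPay_eq_formula θ s o hθ j (Finset.mem_erase.mp hj).1
  rw [Finset.sum_congr rfl hpay, Finset.sum_add_distrib]
  have hSW : (∑ j ∈ Finset.univ.erase s, θ.val j (DA.pdaAlloc θ s o j))
      = DA.SW θ s (DA.pdaAlloc θ s o) := rfl
  have hsum1 : (∑ j ∈ Finset.univ.erase s, (F (o j : ℕ) - F ((o j : ℕ) + 1)))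
      = (∑ j : V, (F (o j : ℕ) - F ((o j : ℕ) + 1)))
        - (F (o s : ℕ) - F ((o s : ℕ) + 1)) :=
    Finset.sum_erase_eq_sub (Finset.mem_univ s)
  have h2 : (∑ j : V, (F (o j : ℕ) - F ((o j : ℕ) + 1)))
      = ∑ t ∈ Finset.range (Fintype.card V), (F t - F (t + 1)) := by
    rw [← Fin.sum_univ_eq_sum_range (fun t => F t - F (t + 1)) (Fintype.card V)]
    exact Equiv.sum_comp o (fun t : Fin (Fintype.card V) => F (t : ℕ) - F ((t : ℕ) + 1))
  have h3 : (∑ t ∈ Finset.range (Fintype.card V), (F t - F (t + 1)))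
      = F 0 - F (Fintype.card V) := Finset.sum_range_sub' F (Fintype.card V)
  have hF0 : F 0 = 0 := by
    show DA.SWstar θ s {l | (o l : ℕ) < 0} (DA.pdaStep θ s o 0) = 0
    rw [DA.pdaStep_zero]
    exact DA.SWstar_no_seller θ s hθ (by simp)
  have hFs : F (o s : ℕ) = 0 := by
    show DA.SWstar θ s {l | (o l : ℕ) < (o s : ℕ)} (DA.pdaStep θ s o (o s : ℕ)) = 0
    rw [DA.pdaStep_eq_zero_before θ s o (o s : ℕ) (Nat.le_succ _)]
    exact DA.SWstar_no_seller θ s hθ (by simp)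
  have hFs1 : F ((o s : ℕ) + 1) = DA.SWstar θ s (DA.predeq o s) 0 := by
    show DA.SWstar θ s {l | (o l : ℕ) < (o s : ℕ) + 1}
      (DA.pdaStep θ s o ((o s : ℕ) + 1)) = _
    rw [DA.pdaStep_eq_zero_before θ s o ((o s : ℕ) + 1) le_rfl, ← DA.predeq_eq o s]
  have hFn : F (Fintype.card V) = DA.SWstar θ s Set.univ (DA.pdaAlloc θ s o) := by
    show DA.SWstar θ s {l | (o l : ℕ) < Fintype.card V}
      (DA.pdaStep θ s o (Fintype.card V)) = _
    have hu : ({l | (o l : ℕ) < Fintype.card V} : Set V) = Set.univ := by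
      ext l; simp [(o l).2]
    rw [hu]; rfl
  rw [hSW]
  linarith [hsum1, h2, h3, hF0, hFs, hFs1, hFn]
end

section
/- For any ε ∈ (0,1], any diffusion auction mechanism in which every buyer i's (expected) utility u_i satisfies ε·φ_i(θ') ≤ u_i ≤ φ_i(θ') under truthful reporting has expected revenue at most ε·φ_s(θ') + (1−ε)·SW*(θ', V): since revenue equals SW(θ', π) − Σ_{i∈N} u_i ≤ SW*(θ', V) − ε·Σ_{i∈N} φ_i(θ') and Σ_{i∈V} φ_i(θ') = SW*(θ', V), the bound Rev ≤ ε·φ_s(θ') + (1−ε)·SW*(θ', V) holds. -/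
section AuxLemmas

variable {V : Type*} [Fintype V] [DecidableEq V]

open Finset in
/-- Shapley-style telescoping: the weighted sum of marginal contributions over
all agents equals `f univ - f ∅`, for any set function `f`. -/
lemma shapley_telescope [Nonempty V] (f : Finset V → ℝ) :
    ∑ i : V, ∑ B ∈ (Finset.univ.erase i).powerset,
      ((B.card.factorial * (Fintype.card V - B.card - 1).factorial : ℝ) /
        ((Fintype.card V).factorial : ℝ)) * (f (insert i B) - f B)
    = f Finset.univ - f ∅ := by
  classical
  set n := Fintype.card V with hn
  set c : ℕ → ℝ := fun b =>
    ((b.factorial * (n - b - 1).factorial : ℝ) / (n.factorial : ℝ)) with hc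
  have hnpos : 0 < n := Fintype.card_pos
  have hfacne : ((n.factorial : ℝ)) ≠ 0 := by
    exact_mod_cast Nat.factorial_ne_zero n
  have swap : ∀ g : V → Finset V → ℝ,
      (∑ i : V, ∑ B ∈ (Finset.univ.erase i).powerset, g i B)
      = ∑ B ∈ Finset.univ.powerset, ∑ i ∈ Bᶜ, g i B := by
    intro g
    refine Finset.sum_comm' ?_
    intro i B
    simp only [Finset.mem_univ, true_and, Finset.mem_powerset,
      Finset.subset_erase, Finset.mem_compl, Finset.subset_univ, and_true]
  have step0 : ∑ i : V, ∑ B ∈ (Finset.univ.erase i).powerset,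
      ((B.card.factorial * (n - B.card - 1).factorial : ℝ) /
        ((n.factorial : ℝ))) * (f (insert i B) - f B)
      = (∑ B ∈ Finset.univ.powerset, ∑ i ∈ Bᶜ, c B.card * f (insert i B))
        - (∑ B ∈ Finset.univ.powerset, ∑ i ∈ Bᶜ, c B.card * f B) := by
    simp only [mul_sub, Finset.sum_sub_distrib]
    rw [swap (fun i B => c B.card * f (insert i B)), swap (fun i B => c B.card * f B)]
  rw [step0]
  have h1 : ∑ B ∈ Finset.univ.powerset, ∑ i ∈ Bᶜ, c B.card * f (insert i B)
      = ∑ A ∈ Finset.univ.powerset, ∑ i ∈ A, c (A.card - 1) * f A := by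
    rw [Finset.sum_sigma' _ _ (fun B i => c B.card * f (insert i B)),
      Finset.sum_sigma' _ _ (fun A i => c (A.card - 1) * f A)]
    refine Finset.sum_nbij' (fun p => ⟨insert p.2 p.1, p.2⟩)
      (fun p => ⟨p.1.erase p.2, p.2⟩) ?_ ?_ ?_ ?_ ?_
    · rintro ⟨B, i⟩ hp
      simp only [Finset.mem_sigma, Finset.mem_powerset] at hp ⊢
      exact ⟨Finset.subset_univ _, Finset.mem_insert_self _ _⟩
    · rintro ⟨A, i⟩ hp
      simp only [Finset.mem_sigma, Finset.mem_powerset, Finset.mem_compl] at hp ⊢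
      exact ⟨Finset.subset_univ _, Finset.notMem_erase i A⟩
    · rintro ⟨B, i⟩ hp
      simp only [Finset.mem_sigma, Finset.mem_powerset, Finset.mem_compl] at hp
      simp [Finset.erase_insert hp.2]
    · rintro ⟨A, i⟩ hp
      simp only [Finset.mem_sigma, Finset.mem_powerset] at hp
      simp [Finset.insert_erase hp.2]
    · rintro ⟨B, i⟩ hp
      simp only [Finset.mem_sigma, Finset.mem_powerset, Finset.mem_compl] at hp
      have hcard : (insert i B).card = B.card + 1 :=
        Finset.card_insert_of_notMem hp.2
      simp [hcard]
  have h2 : ∑ B ∈ Finset.univ.powerset, ∑ i ∈ Bᶜ, c B.card * f B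
      = ∑ B ∈ Finset.univ.powerset, ((n : ℝ) - B.card) * (c B.card * f B) := by
    refine Finset.sum_congr rfl fun B hB => ?_
    rw [Finset.sum_const, nsmul_eq_mul, Finset.card_compl]
    have hle : B.card ≤ n := by
      simpa [hn] using Finset.card_le_univ B
    rw [Nat.cast_sub hle]
  have h1' : ∑ A ∈ Finset.univ.powerset, ∑ i ∈ A, c (A.card - 1) * f A
      = ∑ A ∈ Finset.univ.powerset, (A.card : ℝ) * (c (A.card - 1) * f A) := by
    refine Finset.sum_congr rfl fun A hA => ?_
    rw [Finset.sum_const, nsmul_eq_mul]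
  rw [h1, h1', h2, ← Finset.sum_sub_distrib]
  have huniv_mem : (Finset.univ : Finset V) ∈ (Finset.univ : Finset V).powerset :=
    Finset.mem_powerset.mpr (Finset.subset_univ _)
  have hempty_mem : (∅ : Finset V) ∈ (Finset.univ : Finset V).powerset :=
    Finset.mem_powerset.mpr (Finset.empty_subset _)
  have hne : (Finset.univ : Finset V) ≠ (∅ : Finset V) :=
    Finset.univ_nonempty.ne_empty
  rw [Finset.sum_eq_add_of_mem (Finset.univ : Finset V) (∅ : Finset V)
    huniv_mem hempty_mem hne ?_]
  · -- compute the two remaining terms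
    have hcu : (Finset.univ : Finset V).card = n := by
      simp [hn, Finset.card_univ]
    have hterm1 : ((Finset.univ : Finset V).card : ℝ)
        * (c ((Finset.univ : Finset V).card - 1) * f Finset.univ)
        - ((n : ℝ) - (Finset.univ : Finset V).card)
          * (c (Finset.univ : Finset V).card * f Finset.univ)
        = f Finset.univ := by
      rw [hcu]
      have h0 : n - (n - 1) - 1 = 0 := by omega
      have hmf : (n : ℝ) * ((n - 1).factorial : ℝ) = (n.factorial : ℝ) := by
        exact_mod_cast Nat.mul_factorial_pred hnpos.ne'
      simp only [hc, h0, Nat.factorial_zero, Nat.cast_one, mul_one, sub_self,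
        zero_mul, sub_zero]
      field_simp
      linear_combination (f (Finset.univ : Finset V)) * hmf
    have hterm2 : ((∅ : Finset V).card : ℝ)
        * (c ((∅ : Finset V).card - 1) * f ∅)
        - ((n : ℝ) - (∅ : Finset V).card) * (c (∅ : Finset V).card * f ∅)
        = - f ∅ := by
      simp only [Finset.card_empty, Nat.cast_zero, zero_mul, zero_sub, sub_zero]
      have hmf : (n : ℝ) * ((n - 1).factorial : ℝ) = (n.factorial : ℝ) := by
        exact_mod_cast Nat.mul_factorial_pred hnpos.ne'
      simp only [hc, Nat.factorial_zero, Nat.cast_one, one_mul, Nat.sub_zero]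
      field_simp
      linear_combination (-f (∅ : Finset V)) * hmf
    rw [hterm1, hterm2]
    ring
  · -- generic coalitions contribute zero
    intro A hA ⟨hAu, hAe⟩
    set a := A.card with ha
    have hapos : 0 < a := Finset.card_pos.mpr (Finset.nonempty_of_ne_empty hAe)
    have haltn : a < n := by
      have : A ⊂ Finset.univ := (Finset.subset_univ A).ssubset_of_ne hAu
      simpa [hn, Finset.card_univ] using Finset.card_lt_card this
    have f3 : n - (a - 1) - 1 = n - a := by omega
    have key : (a : ℝ) * c (a - 1) = ((n : ℝ) - a) * c a := by
      simp only [hc, f3]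
      rw [show ((n : ℝ) - a) = ((n - a : ℕ) : ℝ) from
        (Nat.cast_sub (le_of_lt haltn)).symm]
      field_simp
      have natEq : a * ((a - 1).factorial * (n - a).factorial)
          = (n - a) * (a.factorial * (n - a - 1).factorial) := by
        have f1 : a * (a - 1).factorial = a.factorial :=
          Nat.mul_factorial_pred hapos.ne'
        have f2 : (n - a) * (n - a - 1).factorial = (n - a).factorial :=
          Nat.mul_factorial_pred (by omega)
        calc a * ((a - 1).factorial * (n - a).factorial)
            = (a * (a - 1).factorial) * (n - a).factorial := by ring
          _ = a.factorial * (n - a).factorial := by rw [f1]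
          _ = a.factorial * ((n - a) * (n - a - 1).factorial) := by rw [f2]
          _ = (n - a) * (a.factorial * (n - a - 1).factorial) := by ring
      rw [mul_assoc, mul_assoc]
      exact_mod_cast natEq
    have : (a : ℝ) * (c (a - 1) * f A) - ((n : ℝ) - a) * (c a * f A)
        = ((a : ℝ) * c (a - 1) - ((n : ℝ) - a) * c a) * f A := by ring
    rw [this, key]
    ring

/-- Any set of feasible social welfares is bounded above. -/
lemma bddAbove_sw {k : ℕ} (θ : DA.Profile V k) (s : V) (B : Set V)
    (πhat : V → ℕ) : BddAbove (DA.SW θ s '' DA.feasAllocs θ s B πhat) := by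
  refine ⟨∑ i ∈ Finset.univ.erase s, ∑ q ∈ Finset.range (k + 1), |θ.val i q|, ?_⟩
  rintro x ⟨π, ⟨hs, hsum, hfeas, hge⟩, rfl⟩
  refine Finset.sum_le_sum fun i hi => ?_
  have hπi : π i ≤ k :=
    le_trans (Finset.single_le_sum (fun j _ => Nat.zero_le _) hi) hsum
  calc θ.val i (π i) ≤ |θ.val i (π i)| := le_abs_self _
    _ ≤ ∑ q ∈ Finset.range (k + 1), |θ.val i q| :=
      Finset.single_le_sum (f := fun q => |θ.val i q|) (fun q _ => abs_nonneg _)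
        (Finset.mem_range.mpr (Nat.lt_succ_of_le hπi))

lemma zero_mem_feasAllocs {k : ℕ} (θ : DA.Profile V k) (s : V) (B : Set V) :
    (0 : V → ℕ) ∈ DA.feasAllocs θ s B 0 :=
  ⟨rfl, by simp, fun i _ => rfl, fun j _ => le_rfl⟩

lemma sw_zero_of_valid {k : ℕ} (θ : DA.Profile V k) (s : V) (hθ : θ.Valid s)
    (π : V → ℕ) (h0 : ∀ i, i ≠ s → π i = 0) : DA.SW θ s π = 0 := by
  refine Finset.sum_eq_zero fun i hi => ?_
  have hins : i ≠ s := Finset.ne_of_mem_erase hi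
  rw [h0 i hins]
  exact (hθ i hins).1

/-- The empty coalition has zero optimal social welfare. -/
lemma swstar_empty {k : ℕ} (θ : DA.Profile V k) (s : V) (hθ : θ.Valid s) :
    DA.SWstar θ s (↑(∅ : Finset V)) 0 = 0 := by
  have himg : DA.SW θ s '' DA.feasAllocs θ s (↑(∅ : Finset V)) 0 = {0} := by
    refine Set.eq_singleton_iff_unique_mem.mpr ⟨⟨0, zero_mem_feasAllocs θ s _, ?_⟩, ?_⟩
    · exact sw_zero_of_valid θ s hθ 0 fun i _ => rfl
    · rintro x ⟨π, ⟨hs, hsum, hfeas, hge⟩, rfl⟩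
      refine sw_zero_of_valid θ s hθ π fun i hins => hfeas i ?_
      intro hmem
      have : i ∈ ((∅ : Finset V) : Set V) := hmem.2.1
      simpa using this
  rw [DA.SWstar, himg, csSup_singleton]

/-- Shapley efficiency: the contributions of all agents sum to `SW*(θ, V)`. -/
lemma shapley_efficiency {k : ℕ} (θ : DA.Profile V k) (s : V) (hθ : θ.Valid s) :
    ∑ i : V, DA.shapley θ s i = DA.SWstar θ s Set.univ 0 := by
  have : Nonempty V := ⟨s⟩
  have ht := shapley_telescope (V := V) (fun A => DA.SWstar θ s (↑A) 0)
  rw [show ((Finset.univ : Finset V) : Set V) = Set.univ from Finset.coe_univ,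
    swstar_empty θ s hθ, sub_zero] at ht
  simpa only [DA.shapley] using ht

end AuxLemmas

/-- For any ε ∈ (0,1], any diffusion auction mechanism in which
every buyer i's utility u_i = v_i(π_i) − p_i satisfies
ε·φ_i(θ') ≤ u_i ≤ φ_i(θ') under truthful reporting has revenue at most
ε·φ_s(θ') + (1−ε)·SW*(θ', V). -/
theorem shapley_fair_revenue_upper_bound {V : Type*} [Fintype V] [DecidableEq V]
    {k : ℕ} (hk : 1 ≤ k) (θ : DA.Profile V k) (s : V) (hθ : θ.Valid s)
    (ε : ℝ) (hε0 : 0 < ε) (hε1 : ε ≤ 1)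
    (π : V → ℕ) (p : V → ℝ)
    (hπ : π ∈ DA.feasAllocs θ s Set.univ 0)
    (hu : ∀ i : V, i ≠ s →
        ε * DA.shapley θ s i ≤ θ.val i (π i) - p i
        ∧ θ.val i (π i) - p i ≤ DA.shapley θ s i) :
    ∑ i ∈ Finset.univ.erase s, p i
      ≤ ε * DA.shapley θ s s + (1 - ε) * DA.SWstar θ s Set.univ 0 := by
  classical
  have heff : ∑ i : V, DA.shapley θ s i = DA.SWstar θ s Set.univ 0 :=
    shapley_efficiency θ s hθ
  have hSWle : DA.SW θ s π ≤ DA.SWstar θ s Set.univ 0 :=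
    le_csSup (bddAbove_sw θ s Set.univ 0) ⟨π, hπ, rfl⟩
  have hsum_shap : ∑ i ∈ Finset.univ.erase s, DA.shapley θ s i
      = DA.SWstar θ s Set.univ 0 - DA.shapley θ s s := by
    have h := Finset.sum_erase_add Finset.univ (DA.shapley θ s) (Finset.mem_univ s)
    linarith [heff, h]
  have hub : ε * ∑ i ∈ Finset.univ.erase s, DA.shapley θ s i
      ≤ ∑ i ∈ Finset.univ.erase s, (θ.val i (π i) - p i) := by
    rw [Finset.mul_sum]
    exact Finset.sum_le_sum fun i hi => (hu i (Finset.ne_of_mem_erase hi)).1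
  have hrev : ∑ i ∈ Finset.univ.erase s, p i
      = DA.SW θ s π - ∑ i ∈ Finset.univ.erase s, (θ.val i (π i) - p i) := by
    rw [DA.SW, ← Finset.sum_sub_distrib]
    exact Finset.sum_congr rfl fun i _ => by ring
  rw [hrev]
  rw [hsum_shap] at hub
  nlinarith [hSWle, hub, hε0, hε1]
end
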